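/- arXiv:1601.03175 — 4 statements merged into one kernel-verified Lean document; each statement's English description precedes it below -/
import Mathlib

section
/- Let T be a bounded linear operator on an infinite-dimensional complex Banach space. T satisfies property (Z_{E_a}) if and only if T satisfies Weyl's theorem (σ(T)\σ_W(T) = E^0(T)) and E^0(T) = E_a(T). -/
open Set

noncomputable section

namespace ZProps

variable {X : Type*} [NormedAddCommGroup X] [NormedSpace ℂ X] [CompleteSpace X]

/-- The spectrum of `T`. -/
def sp (T : X →L[ℂ] X) : Set ℂ := spectrum ℂ T

/-- The approximate point spectrum: `λ` such that `T - λ` is not bounded below. -/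
def spa (T : X →L[ℂ] X) : Set ℂ :=
  {l | ¬ ∃ c > (0:ℝ), ∀ x : X, c * ‖x‖ ≤ ‖(T - l • 1) x‖}

/-- The point spectrum (eigenvalues). -/
def spp (T : X →L[ℂ] X) : Set ℂ := {l | ∃ x : X, x ≠ 0 ∧ T x = l • x}

/-- Eigenvalues of finite multiplicity. -/
def spp0 (T : X →L[ℂ] X) : Set ℂ :=
  {l | l ∈ spp T ∧ FiniteDimensional ℂ (LinearMap.ker ((T - l • 1 : X →L[ℂ] X) : X →ₗ[ℂ] X))}

/-- Isolated points of a subset of `ℂ`. -/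
def iso (A : Set ℂ) : Set ℂ :=
  {l | l ∈ A ∧ ∃ ε > (0:ℝ), ∀ μ ∈ A, μ ≠ l → ε ≤ ‖μ - l‖}

def Ea (T : X →L[ℂ] X) : Set ℂ := iso (spa T) ∩ spp T
def Ea0 (T : X →L[ℂ] X) : Set ℂ := iso (spa T) ∩ spp0 T
def Efull (T : X →L[ℂ] X) : Set ℂ := iso (sp T) ∩ spp T
def E0 (T : X →L[ℂ] X) : Set ℂ := iso (sp T) ∩ spp0 T

/-- Fredholm operator: finite-dimensional kernel, closed range of finite codimension. -/
def IsFredholmOp (S : X →L[ℂ] X) : Prop :=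
  FiniteDimensional ℂ (LinearMap.ker (S : X →ₗ[ℂ] X)) ∧
  FiniteDimensional ℂ (X ⧸ LinearMap.range (S : X →ₗ[ℂ] X)) ∧
  IsClosed ((LinearMap.range (S : X →ₗ[ℂ] X) : Submodule ℂ X) : Set X)

/-- Weyl operator: Fredholm of index 0. -/
def IsWeylOp (S : X →L[ℂ] X) : Prop :=
  IsFredholmOp S ∧
  Module.finrank ℂ (LinearMap.ker (S : X →ₗ[ℂ] X)) = Module.finrank ℂ (X ⧸ LinearMap.range (S : X →ₗ[ℂ] X))

/-- Weyl spectrum. -/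
def spW (T : X →L[ℂ] X) : Set ℂ := {l | ¬ IsWeylOp (T - l • 1)}

def HasFiniteAscent (S : X →L[ℂ] X) : Prop :=
  ∃ n : ℕ, LinearMap.ker ((S ^ n : X →L[ℂ] X) : X →ₗ[ℂ] X) = LinearMap.ker ((S ^ (n + 1) : X →L[ℂ] X) : X →ₗ[ℂ] X)

def HasFiniteDescent (S : X →L[ℂ] X) : Prop :=
  ∃ n : ℕ, LinearMap.range ((S ^ n : X →L[ℂ] X) : X →ₗ[ℂ] X) = LinearMap.range ((S ^ (n + 1) : X →L[ℂ] X) : X →ₗ[ℂ] X)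

/-- Ascent of an operator (junk value if infinite). -/
def ascent (S : X →L[ℂ] X) : ℕ :=
  sInf {n : ℕ | LinearMap.ker ((S ^ n : X →L[ℂ] X) : X →ₗ[ℂ] X) = LinearMap.ker ((S ^ (n + 1) : X →L[ℂ] X) : X →ₗ[ℂ] X)}

/-- Poles of the resolvent: spectral points where `T - λ` has finite ascent and descent. -/
def poles (T : X →L[ℂ] X) : Set ℂ :=
  {l | l ∈ sp T ∧ HasFiniteAscent (T - l • 1) ∧ HasFiniteDescent (T - l • 1)}

/-- Poles of finite rank. -/
def poles0 (T : X →L[ℂ] X) : Set ℂ :=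
  {l | l ∈ poles T ∧ FiniteDimensional ℂ (LinearMap.ker ((T - l • 1 : X →L[ℂ] X) : X →ₗ[ℂ] X))}

/-- Left poles: `λ ∈ σ_a(T)` with finite ascent `a = a(T-λ)` and `R((T-λ)^(a+1))` closed. -/
def leftPoles (T : X →L[ℂ] X) : Set ℂ :=
  {l | l ∈ spa T ∧ HasFiniteAscent (T - l • 1) ∧
    IsClosed ((LinearMap.range (((T - l • 1) ^ (ascent (T - l • 1) + 1) : X →L[ℂ] X) : X →ₗ[ℂ] X) : Submodule ℂ X) : Set X)}

/-- Left poles of finite rank. -/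
def leftPoles0 (T : X →L[ℂ] X) : Set ℂ :=
  {l | l ∈ leftPoles T ∧ FiniteDimensional ℂ (LinearMap.ker ((T - l • 1 : X →L[ℂ] X) : X →ₗ[ℂ] X))}

/-- A linear endomorphism of a normed space is Weyl (Fredholm of index 0). -/
def LMIsWeyl {V : Type*} [NormedAddCommGroup V] [Module ℂ V] (L : V →ₗ[ℂ] V) : Prop :=
  FiniteDimensional ℂ (LinearMap.ker L) ∧
  FiniteDimensional ℂ (V ⧸ LinearMap.range L) ∧
  IsClosed ((LinearMap.range L : Submodule ℂ V) : Set V) ∧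
  Module.finrank ℂ (LinearMap.ker L) = Module.finrank ℂ (V ⧸ LinearMap.range L)

lemma mapsTo_range_pow (S : X →L[ℂ] X) (n : ℕ) :
    ∀ x ∈ LinearMap.range ((S ^ n : X →L[ℂ] X) : X →ₗ[ℂ] X),
      S x ∈ LinearMap.range ((S ^ n : X →L[ℂ] X) : X →ₗ[ℂ] X) := by
  rintro x ⟨y, rfl⟩
  exact ⟨S y, by
    have h : (S ^ n) * S = S * (S ^ n) := (Commute.refl S).pow_left n
    calc (S ^ n) (S y) = ((S ^ n) * S) y := rfl
    _ = (S * S ^ n) y := by rw [h]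
    _ = S ((S ^ n) y) := rfl⟩

/-- B-Weyl operator: for some `n`, `R(S^n)` is closed and the restriction of `S` to
`R(S^n)` is a Weyl operator. -/
def IsBWeylOp (S : X →L[ℂ] X) : Prop :=
  ∃ n : ℕ, IsClosed ((LinearMap.range ((S ^ n : X →L[ℂ] X) : X →ₗ[ℂ] X) : Submodule ℂ X) : Set X) ∧
    LMIsWeyl ((S : X →ₗ[ℂ] X).restrict (mapsTo_range_pow S n))

/-- B-Weyl spectrum. -/
def spBW (T : X →L[ℂ] X) : Set ℂ := {l | ¬ IsBWeylOp (T - l • 1)}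

/-- Single-valued extension property at a point. -/
def HasSVEPAt (T : X →L[ℂ] X) (l : ℂ) : Prop :=
  ∀ U : Set ℂ, IsOpen U → l ∈ U → ∀ f : ℂ → X, AnalyticOnNhd ℂ f U →
    (∀ μ ∈ U, (T - μ • 1) (f μ) = 0) → ∀ μ ∈ U, f μ = 0

/-- Riesz operator: `R - μ` is Fredholm for every nonzero `μ`. -/
def IsRieszOp (R : X →L[ℂ] X) : Prop :=
  ∀ μ : ℂ, μ ≠ 0 → IsFredholmOp (R - μ • 1)

/-- Property `(Z_{E_a})`. -/
def PropZEa (T : X →L[ℂ] X) : Prop := sp T \ spW T = Ea T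

/-- Property `(Z_{Π_a})`. -/
def PropZPa (T : X →L[ℂ] X) : Prop := sp T \ spW T = leftPoles T

/-- Weyl's theorem. -/
def WeylThm (T : X →L[ℂ] X) : Prop := sp T \ spW T = E0 T

/-- Browder's theorem. -/
def BrowderThm (T : X →L[ℂ] X) : Prop := sp T \ spW T = poles0 T

/-- Property `(k)`. -/
def PropK (T : X →L[ℂ] X) : Prop := sp T \ spW T = Efull T

/-- Property `(gaw)`. -/
def PropGaw (T : X →L[ℂ] X) : Prop := sp T \ spBW T = Ea T

/-- Property `(aw)`. -/
def PropAw (T : X →L[ℂ] X) : Prop := sp T \ spW T = Ea0 T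

/-- Property `(Baw)`. -/
def PropBaw (T : X →L[ℂ] X) : Prop := sp T \ spBW T = Ea0 T

/-- Property `(gab)`. -/
def PropGab (T : X →L[ℂ] X) : Prop := sp T \ spBW T = leftPoles T

/-- Property `(ab)`. -/
def PropAb (T : X →L[ℂ] X) : Prop := sp T \ spW T = leftPoles0 T

end ZProps

end



section Aux
open ZProps

variable {X : Type*} [NormedAddCommGroup X] [NormedSpace ℂ X] [CompleteSpace X]

lemma aux_isUnit_of_bijective (S : X →L[ℂ] X) (h : Function.Bijective S) : IsUnit S := by
  let e := ContinuousLinearEquiv.ofBijective S (LinearMap.ker_eq_bot.mpr h.1)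
      (LinearMap.range_eq_top.mpr h.2)
  have he : ∀ x, e x = S x := fun x => rfl
  refine ⟨⟨S, e.symm, ?_, ?_⟩, rfl⟩
  · ext x
    show S (e.symm x) = x
    rw [← he]; exact e.apply_symm_apply x
  · ext x
    show e.symm (S x) = x
    rw [← he]; exact e.symm_apply_apply x

lemma aux_mem_sp_iff (T : X →L[ℂ] X) (l : ℂ) : l ∈ sp T ↔ ¬ IsUnit (T - l • 1) := by
  rw [sp, spectrum.mem_iff, Algebra.algebraMap_eq_smul_one, ← neg_sub T (l • (1 : X →L[ℂ] X)),
    IsUnit.neg_iff]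

lemma aux_spa_subset_sp [Nontrivial X] (T : X →L[ℂ] X) : spa T ⊆ sp T := by
  intro l hl
  rw [aux_mem_sp_iff]
  intro hu
  apply hl
  obtain ⟨u, hu⟩ := hu
  have hpos : (0:ℝ) < ‖((u⁻¹ : (X →L[ℂ] X)ˣ) : X →L[ℂ] X)‖ := Units.norm_pos u⁻¹
  refine ⟨‖((u⁻¹ : (X →L[ℂ] X)ˣ) : X →L[ℂ] X)‖⁻¹, inv_pos.mpr hpos, fun x => ?_⟩
  have hx : ((u⁻¹ : (X →L[ℂ] X)ˣ) : X →L[ℂ] X) ((T - l • 1) x) = x := by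
    rw [← hu]
    calc ((u⁻¹ : (X →L[ℂ] X)ˣ) : X →L[ℂ] X) ((u : X →L[ℂ] X) x)
        = (((u⁻¹ : (X →L[ℂ] X)ˣ) : X →L[ℂ] X) * (u : X →L[ℂ] X)) x := rfl
      _ = x := by rw [u.inv_mul]; rfl
  have hb : ‖x‖ ≤ ‖((u⁻¹ : (X →L[ℂ] X)ˣ) : X →L[ℂ] X)‖ * ‖(T - l • 1) x‖ := by
    conv_lhs => rw [← hx]
    exact ContinuousLinearMap.le_opNorm _ _
  rw [inv_mul_le_iff₀ hpos]
  linarith [hb]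

lemma aux_spp_subset_spa (T : X →L[ℂ] X) : spp T ⊆ spa T := by
  rintro l ⟨x, hx, hTx⟩ ⟨c, hc, hb⟩
  have h0 : (T - l • 1) x = 0 := by
    simp [ContinuousLinearMap.sub_apply, ContinuousLinearMap.smul_apply, hTx]
  have := hb x
  rw [h0, norm_zero] at this
  have : ‖x‖ ≤ 0 := by nlinarith [norm_nonneg x]
  exact hx (norm_le_zero_iff.mp this)

lemma aux_injective_of_not_spa (T : X →L[ℂ] X) {l : ℂ} (hl : l ∉ spa T) :
    Function.Injective (T - l • (1 : X →L[ℂ] X)) := by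
  rw [spa, Set.mem_setOf_eq, not_not] at hl
  obtain ⟨c, hc, hb⟩ := hl
  intro x y hxy
  have h0 : (T - l • 1) (x - y) = 0 := by rw [map_sub, hxy, sub_self]
  have := hb (x - y)
  rw [h0, norm_zero] at this
  have : ‖x - y‖ ≤ 0 := by nlinarith [norm_nonneg (x - y)]
  exact sub_eq_zero.mp (norm_le_zero_iff.mp this)

/-- Pure algebra: if `F` has finite-dimensional range and `1 - F` is injective,
then `1 - F` is surjective. -/
lemma aux_one_sub_surj {V : Type*} [AddCommGroup V] [Module ℂ V]
    (F : V →ₗ[ℂ] V) (hF : FiniteDimensional ℂ (LinearMap.range F))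
    (hinj : Function.Injective ⇑((1 : V →ₗ[ℂ] V) - F)) :
    Function.Surjective ⇑((1 : V →ₗ[ℂ] V) - F) := by
  set R := LinearMap.range F with hR
  have hmapsTo : ∀ x ∈ R, ((1 : V →ₗ[ℂ] V) - F) x ∈ R := by
    intro x hx
    have h1 : ((1 : V →ₗ[ℂ] V) - F) x = x - F x := rfl
    rw [h1]
    exact R.sub_mem hx (LinearMap.mem_range_self F x)
  let g : R →ₗ[ℂ] R := ((1 : V →ₗ[ℂ] V) - F).restrict hmapsTo
  have hginj : Function.Injective g := by
    intro a b hab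
    apply Subtype.ext
    apply hinj
    exact congrArg Subtype.val hab
  have hgsurj : Function.Surjective g := LinearMap.injective_iff_surjective.mp hginj
  intro y
  obtain ⟨r, hr⟩ := hgsurj ⟨F y, LinearMap.mem_range_self F y⟩
  have hr' : ((1 : V →ₗ[ℂ] V) - F) (r : V) = F y := congrArg Subtype.val hr
  refine ⟨y + (r : V), ?_⟩
  rw [map_add, hr']
  show y - F y + F y = y
  abel

/-- A Weyl operator admits a finite-rank correction making it invertible. -/
lemma aux_weyl_correction (S : X →L[ℂ] X) (h : IsWeylOp S) :
    ∃ K : X →L[ℂ] X, FiniteDimensional ℂ (LinearMap.range (K : X →ₗ[ℂ] X)) ∧ IsUnit (S + K) := by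
  obtain ⟨⟨hker, hcoker, hclosed⟩, hrank⟩ := h
  obtain ⟨N, hN⟩ := Submodule.exists_isCompl (LinearMap.range (S : X →ₗ[ℂ] X))
  let eN : (X ⧸ LinearMap.range (S : X →ₗ[ℂ] X)) ≃ₗ[ℂ] N := Submodule.quotientEquivOfIsCompl _ _ hN
  haveI : FiniteDimensional ℂ N := Module.Finite.equiv eN
  have hrankN : Module.finrank ℂ (LinearMap.ker (S : X →ₗ[ℂ] X)) = Module.finrank ℂ N := by
    rw [hrank, eN.finrank_eq]
  obtain ⟨J⟩ := FiniteDimensional.nonempty_linearEquiv_of_finrank_eq hrankN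
  obtain ⟨P, hP⟩ := Submodule.ClosedComplemented.of_finiteDimensional (LinearMap.ker (S : X →ₗ[ℂ] X))
  let K : X →L[ℂ] X :=
    (N.subtypeL).comp ((LinearMap.toContinuousLinearMap (J : LinearMap.ker (S : X →ₗ[ℂ] X) →ₗ[ℂ] N)).comp P)
  have hKapp : ∀ x : X, K x = (J (P x) : X) := fun x => rfl
  have hrange : LinearMap.range (K : X →ₗ[ℂ] X) ≤ N := by
    rintro _ ⟨x, rfl⟩
    rw [ContinuousLinearMap.coe_coe, hKapp]
    exact (J (P x)).2
  refine ⟨K, Submodule.finiteDimensional_of_le hrange, aux_isUnit_of_bijective _ ⟨?_, ?_⟩⟩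
  · -- injective
    have : ∀ x, (S + K) x = 0 → x = 0 := by
      intro x hx
      have hx' : S x + (J (P x) : X) = 0 := by rw [← hKapp]; exact hx
      have hSx : S x ∈ N := by
        have : S x = -(J (P x) : X) := by linear_combination (norm := abel) hx'
        rw [this]; exact N.neg_mem (J (P x)).2
      have hS0 : S x = 0 :=
        (Submodule.disjoint_def.mp hN.disjoint) (S x) (LinearMap.mem_range_self _ x) hSx
      have hJ0 : (J (P x) : X) = 0 := by
        rw [hS0, zero_add] at hx'; exact hx'
      have hP0 : P x = 0 := by
        apply J.injective
        rw [map_zero]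
        exact Subtype.ext hJ0
      have := hP ⟨x, hS0⟩
      rw [hP0] at this
      exact (congrArg Subtype.val this).symm
    intro x y hxy
    have := this (x - y) (by rw [map_sub, hxy, sub_self])
    exact sub_eq_zero.mp this
  · -- surjective
    intro y
    have hy : y ∈ LinearMap.range (S : X →ₗ[ℂ] X) ⊔ N := by rw [hN.sup_eq_top]; trivial
    obtain ⟨s, hs, n, hn, hsn⟩ := Submodule.mem_sup.mp hy
    obtain ⟨x, rfl⟩ := hs
    set k : LinearMap.ker (S : X →ₗ[ℂ] X) := J.symm ⟨n, hn⟩ with hk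
    refine ⟨x - (P x : X) + (k : X), ?_⟩
    have hSz : S (x - (P x : X) + (k : X)) = S x := by
      rw [map_add, map_sub, (show S (P x : X) = 0 from (P x).2), (show S (k : X) = 0 from k.2), sub_zero, add_zero]
    have hPz : P (x - (P x : X) + (k : X)) = k := by
      rw [map_add, map_sub, hP (P x), hP k, sub_self, zero_add]
    have hKz : K (x - (P x : X) + (k : X)) = n := by
      rw [hKapp, hPz, hk, J.apply_symm_apply]
    show S _ + K _ = y
    rw [hSz, hKz]; exact hsn

/-- Stability: near a Weyl operator, injectivity implies invertibility. -/
lemma aux_weyl_stability [Nontrivial X] (S : X →L[ℂ] X) (hS : IsWeylOp S) :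
    ∃ r > (0:ℝ), ∀ μ : ℂ, ‖μ‖ < r →
      Function.Injective (S - μ • (1 : X →L[ℂ] X)) → IsUnit (S - μ • 1) := by
  obtain ⟨K, hKfin, hu⟩ := aux_weyl_correction S hS
  obtain ⟨u, hu⟩ := hu
  have hpos : (0:ℝ) < ‖((u⁻¹ : (X →L[ℂ] X)ˣ) : X →L[ℂ] X)‖ := Units.norm_pos u⁻¹
  refine ⟨‖((u⁻¹ : (X →L[ℂ] X)ˣ) : X →L[ℂ] X)‖⁻¹, inv_pos.mpr hpos, fun μ hμ hinj => ?_⟩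
  have hnorm : ‖-(μ • (1 : X →L[ℂ] X))‖ < ‖((u⁻¹ : (X →L[ℂ] X)ˣ) : X →L[ℂ] X)‖⁻¹ := by
    have h1 : ‖μ • (1 : X →L[ℂ] X)‖ = ‖μ‖ * ‖(1 : X →L[ℂ] X)‖ := norm_smul μ (1 : X →L[ℂ] X)
    rw [norm_neg, h1, ContinuousLinearMap.one_def, ContinuousLinearMap.norm_id, mul_one]
    exact hμ
  let v : (X →L[ℂ] X)ˣ := u.add (-(μ • 1)) hnorm
  have hv : (v : X →L[ℂ] X) = S + K - μ • 1 := by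
    show (u : X →L[ℂ] X) + -(μ • 1) = S + K - μ • 1
    rw [hu, sub_eq_add_neg]
  have hvcancel : ∀ z : X, ((v⁻¹ : (X →L[ℂ] X)ˣ) : X →L[ℂ] X) ((v : X →L[ℂ] X) z) = z := by
    intro z
    calc ((v⁻¹ : (X →L[ℂ] X)ˣ) : X →L[ℂ] X) ((v : X →L[ℂ] X) z)
        = (((v⁻¹ : (X →L[ℂ] X)ˣ) : X →L[ℂ] X) * (v : X →L[ℂ] X)) z := rfl
      _ = z := by rw [v.inv_mul]; rfl
  set F : X →L[ℂ] X := ((v⁻¹ : (X →L[ℂ] X)ˣ) : X →L[ℂ] X) * K with hF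
  have key : S - μ • 1 = (v : X →L[ℂ] X) * ((1 : X →L[ℂ] X) - F) := by
    rw [mul_sub, mul_one, hF, ← mul_assoc, v.mul_inv, one_mul, hv]
    abel
  have hkeyx : ∀ x : X, (S - μ • 1) x = (v : X →L[ℂ] X) (((1 : X →L[ℂ] X) - F) x) := by
    intro x; rw [key]; rfl
  have hle : LinearMap.range (F : X →ₗ[ℂ] X) ≤
      Submodule.map ((((v⁻¹ : (X →L[ℂ] X)ˣ) : X →L[ℂ] X)) : X →ₗ[ℂ] X) (LinearMap.range (K : X →ₗ[ℂ] X)) := by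
    rintro _ ⟨x, rfl⟩
    exact ⟨K x, ⟨x, rfl⟩, rfl⟩
  have hFfin : FiniteDimensional ℂ (LinearMap.range (F : X →ₗ[ℂ] X)) :=
    Submodule.finiteDimensional_of_le hle
  have hFinj : Function.Injective ⇑((1 : X →ₗ[ℂ] X) - (F : X →ₗ[ℂ] X)) := by
    intro x y hxy
    apply hinj
    have h4 : ((1 : X →L[ℂ] X) - F) x = ((1 : X →L[ℂ] X) - F) y := hxy
    rw [hkeyx x, hkeyx y, h4]
  have hFsurj := aux_one_sub_surj (F : X →ₗ[ℂ] X) hFfin hFinj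
  apply aux_isUnit_of_bijective
  constructor
  · intro x y hxy
    apply hFinj
    have h3 := congrArg (((v⁻¹ : (X →L[ℂ] X)ˣ) : X →L[ℂ] X)) hxy
    rw [hkeyx, hkeyx, hvcancel, hvcancel] at h3
    exact h3
  · intro y
    obtain ⟨x, hx⟩ := hFsurj (((v⁻¹ : (X →L[ℂ] X)ˣ) : X →L[ℂ] X) y)
    refine ⟨x, ?_⟩
    rw [hkeyx]
    have hx' : ((1 : X →L[ℂ] X) - F) x = ((v⁻¹ : (X →L[ℂ] X)ˣ) : X →L[ℂ] X) y := hx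
    rw [hx']
    calc (v : X →L[ℂ] X) (((v⁻¹ : (X →L[ℂ] X)ˣ) : X →L[ℂ] X) y)
        = ((v : X →L[ℂ] X) * ((v⁻¹ : (X →L[ℂ] X)ˣ) : X →L[ℂ] X)) y := rfl
      _ = y := by rw [v.mul_inv]; rfl

lemma aux_iso_sp [Nontrivial X] (T : X →L[ℂ] X) {l : ℂ}
    (hl : l ∈ sp T) (hW : IsWeylOp (T - l • 1)) (ha : l ∈ iso (spa T)) : l ∈ iso (sp T) := by
  obtain ⟨hla, ε, hε, hiso⟩ := ha
  obtain ⟨r, hr, hstab⟩ := aux_weyl_stability (T - l • 1) hW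
  refine ⟨hl, min ε r, lt_min hε hr, ?_⟩
  intro μ hμ hne
  by_contra hlt
  push_neg at hlt
  have hεlt : ‖μ - l‖ < ε := lt_of_lt_of_le hlt (min_le_left _ _)
  have hrlt : ‖μ - l‖ < r := lt_of_lt_of_le hlt (min_le_right _ _)
  have hμa : μ ∉ spa T := fun h => absurd (hiso μ h hne) (not_le.mpr hεlt)
  have hinj : Function.Injective (T - μ • (1 : X →L[ℂ] X)) := aux_injective_of_not_spa T hμa
  have heq : (T - l • (1 : X →L[ℂ] X)) - (μ - l) • 1 = T - μ • 1 := by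
    rw [sub_smul]; abel
  have hunit := hstab (μ - l) hrlt (by rw [heq]; exact hinj)
  rw [heq] at hunit
  exact (aux_mem_sp_iff T μ).mp hμ hunit

end Aux

open ZProps in
theorem stmt1 {X : Type*} [NormedAddCommGroup X] [NormedSpace ℂ X] [CompleteSpace X]
    (hinf : ¬ FiniteDimensional ℂ X) (T : X →L[ℂ] X) :
    PropZEa T ↔ WeylThm T ∧ E0 T = Ea T := by
  have hnt : Nontrivial X := by
    by_contra h
    rw [not_nontrivial_iff_subsingleton] at h
    exact hinf (Module.Finite.of_basis (Module.Basis.empty X (ι := Empty)))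
  constructor
  · intro hZ
    have hE0Ea : E0 T ⊆ Ea T := by
      rintro l ⟨⟨hlsp, ε, hε, hbd⟩, hlp, _⟩
      have hla : l ∈ spa T := aux_spp_subset_spa T hlp
      exact ⟨⟨hla, ε, hε, fun μ hμ hne => hbd μ (aux_spa_subset_sp T hμ) hne⟩, hlp⟩
    have hEaE0 : Ea T ⊆ E0 T := by
      intro l hl
      have hl' : l ∈ sp T \ spW T := by rw [hZ]; exact hl
      obtain ⟨hsp, hWmem⟩ := hl'
      have hW : IsWeylOp (T - l • 1) := not_not.mp hWmem
      exact ⟨aux_iso_sp T hsp hW hl.1, hl.2, hW.1.1⟩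
    have hEq : E0 T = Ea T := Set.Subset.antisymm hE0Ea hEaE0
    refine ⟨?_, hEq⟩
    rw [WeylThm, hZ, hEq]
  · rintro ⟨hW, hE⟩
    rw [PropZEa, hW, hE]
end

section
/- Let T be a bounded linear operator on an infinite-dimensional complex Banach space. T satisfies property (Z_{E_a}) if and only if T satisfies property (Z_{Π_a}) and E_a(T) = Π_a(T). -/
open Set

noncomputable section

noncomputable section
namespace ZAux
open ZProps

set_option linter.unusedSectionVars false
set_option maxHeartbeats 1000000

variable {X : Type*} [NormedAddCommGroup X] [NormedSpace ℂ X] [CompleteSpace X]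

lemma sup_closed (Y F : Submodule ℂ X) (hY : IsClosed (Y : Set X)) (hF : FiniteDimensional ℂ F) :
    IsClosed ((Y ⊔ F : Submodule ℂ X) : Set X) := by
  letI : IsClosed (Y : Set X) := hY
  let π := Y.mkQ
  have hcont : Continuous π := continuous_quot_mk
  haveI : FiniteDimensional ℂ (F.map π) := Module.Finite.map _ _
  have hcl : IsClosed ((F.map π : Submodule ℂ (X ⧸ Y)) : Set (X ⧸ Y)) :=
    Submodule.closed_of_finiteDimensional _
  have h1 : (Y ⊔ F : Submodule ℂ X) = (F.map π).comap π := by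
    rw [Submodule.comap_map_eq, Submodule.ker_mkQ, sup_comm]
  rw [h1]
  exact hcl.preimage hcont

lemma range_pow_succ (S : X →L[ℂ] X) (n : ℕ) :
    LinearMap.range ((S ^ (n+1) : X →L[ℂ] X) : X →ₗ[ℂ] X) = (LinearMap.range ((S ^ n : X →L[ℂ] X) : X →ₗ[ℂ] X)).map (S : X →ₗ[ℂ] X) := by
  ext x
  simp only [LinearMap.mem_range, Submodule.mem_map]
  constructor
  · rintro ⟨w, rfl⟩
    exact ⟨(S ^ n) w, ⟨w, rfl⟩, by rw [pow_succ'] ; rfl⟩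
  · rintro ⟨y, ⟨w, rfl⟩, rfl⟩
    exact ⟨w, by rw [pow_succ'] ; rfl⟩

lemma range_pow_antitone (S : X →L[ℂ] X) {m n : ℕ} (h : m ≤ n) :
    LinearMap.range ((S ^ n : X →L[ℂ] X) : X →ₗ[ℂ] X) ≤ LinearMap.range ((S ^ m : X →L[ℂ] X) : X →ₗ[ℂ] X) := by
  obtain ⟨j, rfl⟩ := Nat.exists_eq_add_of_le h
  rintro x ⟨w, rfl⟩
  exact ⟨(S ^ j) w, by rw [pow_add] ; rfl⟩

lemma pow_succ_apply' (S : X →L[ℂ] X) (k : ℕ) (x : X) : (S ^ (k+1)) x = (S ^ k) (S x) := by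
  rw [pow_succ]; rfl

lemma pow_succ_apply (S : X →L[ℂ] X) (k : ℕ) (x : X) : (S ^ (k+1)) x = S ((S ^ k) x) := by
  rw [pow_succ']; rfl

lemma exists_approx_ker (S : X →L[ℂ] X) (h : IsClosed ((LinearMap.range (S : X →ₗ[ℂ] X) : Submodule ℂ X) : Set X)) :
    ∃ C > 0, ∀ x : X, ∃ k : X, S k = 0 ∧ ‖x - k‖ ≤ C * ‖S x‖ := by
  haveI : CompleteSpace (LinearMap.range (S : X →ₗ[ℂ] X)) := h.completeSpace_coe
  set S' : X →L[ℂ] (LinearMap.range (S : X →ₗ[ℂ] X)) := S.codRestrict _ (fun x => LinearMap.mem_range_self (S : X →ₗ[ℂ] X) x)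
  have hsurj : Function.Surjective S' := by
    rintro ⟨y, x, rfl⟩
    exact ⟨x, rfl⟩
  obtain ⟨C, hC, hCx⟩ := S'.exists_preimage_norm_le hsurj
  refine ⟨C, hC, fun x => ?_⟩
  obtain ⟨x', hx', hnx'⟩ := hCx (S' x)
  refine ⟨x - x', ?_, ?_⟩
  · have : S x' = S x := congrArg Subtype.val hx'
    simp [map_sub, this]
  · simpa using (hnx'.trans (le_of_eq rfl) : ‖x'‖ ≤ C * ‖S x‖)

lemma bddBelow_of_inj (S : X →L[ℂ] X) (hinj : ∀ x, S x = 0 → x = 0)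
    (h : IsClosed ((LinearMap.range (S : X →ₗ[ℂ] X) : Submodule ℂ X) : Set X)) :
    ∃ c > 0, ∀ x : X, c * ‖x‖ ≤ ‖S x‖ := by
  obtain ⟨C, hC, hCx⟩ := exists_approx_ker S h
  refine ⟨C⁻¹, by positivity, fun x => ?_⟩
  obtain ⟨k, hk, hxk⟩ := hCx x
  rw [hinj k hk, sub_zero] at hxk
  rw [inv_mul_le_iff₀ hC] at *
  · linarith

lemma isClosed_map (S : X →L[ℂ] X) (hk : FiniteDimensional ℂ (LinearMap.ker (S : X →ₗ[ℂ] X)))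
    (hr : IsClosed ((LinearMap.range (S : X →ₗ[ℂ] X) : Submodule ℂ X) : Set X))
    (Z : Submodule ℂ X) (hZ : IsClosed (Z : Set X)) :
    IsClosed ((Z.map (S : X →ₗ[ℂ] X) : Submodule ℂ X) : Set X) := by
  obtain ⟨C, hC, hCx⟩ := exists_approx_ker S hr
  set Z' : Submodule ℂ X := Z ⊔ LinearMap.ker (S : X →ₗ[ℂ] X) with hZ'def
  have hZ'cl : IsClosed ((Z' : Submodule ℂ X) : Set X) := sup_closed Z _ hZ hk
  have hmapeq : Z.map (S : X →ₗ[ℂ] X) = Z'.map (S : X →ₗ[ℂ] X) := by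
    apply le_antisymm (Submodule.map_mono le_sup_left)
    rintro _ ⟨z, hz, rfl⟩
    obtain ⟨y, hy, k, hk', rfl⟩ := Submodule.mem_sup.1 hz
    refine ⟨y, hy, ?_⟩
    have : S k = 0 := hk'
    simp [map_add, this]
  rw [hmapeq]
  -- now Z' ⊇ ker S, closed; use controlled closure
  haveI : CompleteSpace Z' := hZ'cl.completeSpace_coe
  set f : NormedAddGroupHom Z' X :=
    ((S.comp Z'.subtypeL).toLinearMap.toAddMonoidHom).mkNormedAddGroupHom ‖S.comp Z'.subtypeL‖
      (fun v => (S.comp Z'.subtypeL).le_opNorm v) with hfdef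
  have hfapp : ∀ v : Z', f v = S (v : X) := fun v => rfl
  set K : AddSubgroup X := (Z'.map (S : X →ₗ[ℂ] X)).toAddSubgroup with hKdef
  have hsurj : f.SurjectiveOnWith K C := by
    rintro h hh
    obtain ⟨z, hz, rfl⟩ := hh
    obtain ⟨k, hk0, hzk⟩ := hCx z
    have hkZ' : k ∈ Z' := Submodule.mem_sup_right hk0
    refine ⟨⟨z - k, Z'.sub_mem hz hkZ'⟩, ?_, ?_⟩
    · show S (z - k) = S z
      simp [map_sub, hk0]
    · simpa using hzk
  have hclosure := controlled_closure_of_complete hC one_pos hsurj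
  apply isClosed_of_closure_subset
  intro x hx
  have hxK : x ∈ K.topologicalClosure := hx
  obtain ⟨g, hg, -⟩ := hclosure x hxK
  rw [hfapp] at hg
  exact ⟨(g : X), g.2, hg⟩

lemma exists_stab (S : X →L[ℂ] X) (hk : FiniteDimensional ℂ (LinearMap.ker (S : X →ₗ[ℂ] X))) :
    ∃ d : ℕ, ∀ n : ℕ, d ≤ n →
      (LinearMap.ker (S : X →ₗ[ℂ] X) ⊓ LinearMap.range ((S ^ n : X →L[ℂ] X) : X →ₗ[ℂ] X)) = LinearMap.ker (S : X →ₗ[ℂ] X) ⊓ LinearMap.range ((S ^ d : X →L[ℂ] X) : X →ₗ[ℂ] X) := by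
  set K : ℕ → Submodule ℂ X := fun n => LinearMap.ker (S : X →ₗ[ℂ] X) ⊓ LinearMap.range ((S ^ n : X →L[ℂ] X) : X →ₗ[ℂ] X) with hK
  haveI : ∀ n, FiniteDimensional ℂ (K n) := fun n =>
    Submodule.finiteDimensional_of_le inf_le_left
  set φ : ℕ → ℕ := fun n => Module.finrank ℂ (K n) with hφ
  obtain ⟨d, hd⟩ : ∃ d, φ d = sInf (Set.range φ) := Nat.sInf_mem (Set.range_nonempty φ)
  refine ⟨d, fun n hn => ?_⟩
  have hle : K n ≤ K d := inf_le_inf le_rfl (range_pow_antitone S hn)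
  have h1 : φ d ≤ φ n := hd ▸ Nat.sInf_le ⟨n, rfl⟩
  exact Submodule.eq_of_le_of_finrank_le hle h1

lemma isClosed_range_pow (S : X →L[ℂ] X) (hk : FiniteDimensional ℂ (LinearMap.ker (S : X →ₗ[ℂ] X)))
    (hr : IsClosed ((LinearMap.range (S : X →ₗ[ℂ] X) : Submodule ℂ X) : Set X)) (n : ℕ) :
    IsClosed ((LinearMap.range ((S ^ n : X →L[ℂ] X) : X →ₗ[ℂ] X) : Submodule ℂ X) : Set X) := by
  induction n with
  | zero =>
    have h : LinearMap.range ((S ^ 0 : X →L[ℂ] X) : X →ₗ[ℂ] X) = ⊤ := by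
      rw [pow_zero]
      exact LinearMap.range_eq_top.2 (fun x => ⟨x, rfl⟩)
    rw [h]
    simp
  | succ k ih =>
    rw [range_pow_succ]
    exact isClosed_map S hk hr _ ih

lemma chain_contradiction (S : X →L[ℂ] X) {ε C : ℝ} (hε : 0 < ε) (hC : 0 < C)
    (hinj : ∀ z : ℂ, z ≠ 0 → ‖z‖ < ε → ∀ x : X, S x = z • x → x = 0)
    (v : ℕ → X) (hSv0 : S (v 0) = 0) (hSvsucc : ∀ n, S (v (n+1)) = v n)
    (hvn : ∀ n, ‖v n‖ ≤ C ^ n * ‖v 0‖) : v 0 = 0 := by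
  by_contra hx0ne
  set t : ℝ := min (ε/2) (1/(4*C)) with ht
  have ht0 : 0 < t := lt_min (by linarith) (by positivity)
  have htε : t < ε := lt_of_le_of_lt (min_le_left _ _) (by linarith)
  have htC : t * C ≤ 1/4 := by
    have h1 : t ≤ 1/(4*C) := min_le_right _ _
    calc t * C ≤ (1/(4*C)) * C := mul_le_mul_of_nonneg_right h1 hC.le
    _ = 1/4 := by field_simp
  set q : ℝ := t * C with hq
  have hq0 : 0 ≤ q := by positivity
  have hq1 : q < 1 := lt_of_le_of_lt htC (by norm_num)
  set z : ℂ := (t : ℂ) with hz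
  have hznorm : ‖z‖ = t := by
    rw [hz, Complex.norm_real, Real.norm_eq_abs, abs_of_pos ht0]
  have hzne : z ≠ 0 := by
    simp only [hz, ne_eq, Complex.ofReal_eq_zero]
    exact ne_of_gt ht0
  have hterm : ∀ n, ‖z ^ n • v n‖ ≤ q ^ n * ‖v 0‖ := by
    intro n
    rw [norm_smul, norm_pow, hznorm]
    have h2 : (0:ℝ) ≤ t ^ n := by positivity
    calc t ^ n * ‖v n‖ ≤ t ^ n * (C ^ n * ‖v 0‖) := by nlinarith [hvn n]
    _ = q ^ n * ‖v 0‖ := by rw [hq, mul_pow]; ring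
  have hgeom : Summable (fun n : ℕ => q ^ n * ‖v 0‖) :=
    (summable_geometric_of_lt_one hq0 hq1).mul_right _
  have hsum : Summable (fun n : ℕ => z ^ n • v n) :=
    Summable.of_norm_bounded hgeom hterm
  set g : X := ∑' n : ℕ, z ^ n • v n with hg
  have hsum2 : Summable (fun n : ℕ => S (z ^ n • v n)) :=
    hsum.map S.toLinearMap.toAddMonoidHom S.continuous
  have hsum2' : Summable (fun n : ℕ => z ^ n • S (v n)) := by
    simpa only [map_smul] using hsum2
  have hSg : S g = ∑' n : ℕ, z ^ n • S (v n) := by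
    rw [hg, S.map_tsum hsum]
    simp only [map_smul]
  have hshift : ∑' n : ℕ, z ^ n • S (v n) = ∑' n : ℕ, z ^ (n+1) • v n := by
    rw [Summable.tsum_eq_zero_add hsum2']
    simp only [pow_zero, one_smul, hSv0, zero_add]
    congr 1
    funext n
    rw [hSvsucc n]
  have hzg : z • g = ∑' n : ℕ, z ^ (n+1) • v n := by
    rw [hg, ← (hsum.hasSum.const_smul z).tsum_eq]
    congr 1
    funext n
    rw [smul_smul, ← pow_succ']
  have hSgzg : S g = z • g := by rw [hSg, hshift, hzg]
  have hg0 : g = 0 := hinj z hzne (by rw [hznorm]; exact htε) g hSgzg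
  have hsumtail : Summable (fun n : ℕ => z ^ (n+1) • v (n+1)) :=
    (summable_nat_add_iff 1).2 hsum
  have htail : g = v 0 + ∑' n : ℕ, z ^ (n+1) • v (n+1) := by
    rw [hg, Summable.tsum_eq_zero_add hsum]
    simp only [pow_zero, one_smul]
  have hnormtailsum : Summable (fun n : ℕ => ‖z ^ (n+1) • v (n+1)‖) := by
    apply Summable.of_nonneg_of_le (fun n => norm_nonneg _) (fun n => hterm (n+1))
    exact (summable_nat_add_iff 1).2 hgeom
  have htailnorm : ‖∑' n : ℕ, z ^ (n+1) • v (n+1)‖ ≤ (1/3) * ‖v 0‖ := by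
    have h1 : ‖∑' n : ℕ, z ^ (n+1) • v (n+1)‖ ≤ ∑' n : ℕ, ‖z ^ (n+1) • v (n+1)‖ :=
      norm_tsum_le_tsum_norm hnormtailsum
    have h2 : ∑' n : ℕ, ‖z ^ (n+1) • v (n+1)‖ ≤ ∑' n : ℕ, q ^ (n+1) * ‖v 0‖ :=
      Summable.tsum_le_tsum (fun n => hterm (n+1)) hnormtailsum ((summable_nat_add_iff 1).2 hgeom)
    have h3 : ∑' n : ℕ, q ^ (n+1) * ‖v 0‖ = q * ((1-q)⁻¹ * ‖v 0‖) := by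
      have hfun : (fun n : ℕ => q ^ (n+1) * ‖v 0‖) = fun n : ℕ => q * (q ^ n * ‖v 0‖) := by
        funext n; ring
      rw [hfun, tsum_mul_left, tsum_mul_right, tsum_geometric_of_lt_one hq0 hq1]
    have h4 : q * ((1-q)⁻¹ * ‖v 0‖) ≤ (1/3) * ‖v 0‖ := by
      have h5 : (1-q)⁻¹ ≤ 4/3 := by
        rw [inv_le_comm₀ (by linarith) (by norm_num)]
        linarith
      have h6 : (0:ℝ) < 1 - q := by linarith
      have h7 : (0:ℝ) ≤ (1-q)⁻¹ := by positivity
      nlinarith [norm_nonneg (v 0), mul_le_mul_of_nonneg_right h5 (norm_nonneg (v 0))]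
    linarith
  rw [hg0] at htail
  have hv0eq : v 0 = -(∑' n : ℕ, z ^ (n+1) • v (n+1)) :=
    eq_neg_of_add_eq_zero_left htail.symm
  have : ‖v 0‖ ≤ (1/3) * ‖v 0‖ := by
    calc ‖v 0‖ = ‖∑' n : ℕ, z ^ (n+1) • v (n+1)‖ := by rw [hv0eq, norm_neg]
    _ ≤ (1/3) * ‖v 0‖ := htailnorm
  have hn0 : ‖v 0‖ = 0 := by
    have := norm_nonneg (v 0)
    linarith
  exact hx0ne (norm_eq_zero.1 hn0)

lemma finite_ascent_of_punctured_inj (S : X →L[ℂ] X)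
    (hk : FiniteDimensional ℂ (LinearMap.ker (S : X →ₗ[ℂ] X)))
    (hr : IsClosed ((LinearMap.range (S : X →ₗ[ℂ] X) : Submodule ℂ X) : Set X))
    {ε : ℝ} (hε : 0 < ε)
    (hinj : ∀ z : ℂ, z ≠ 0 → ‖z‖ < ε → ∀ x : X, S x = z • x → x = 0) :
    ∃ d : ℕ, LinearMap.ker ((S ^ d : X →L[ℂ] X) : X →ₗ[ℂ] X) = LinearMap.ker ((S ^ (d+1) : X →L[ℂ] X) : X →ₗ[ℂ] X) := by
  obtain ⟨d, hd⟩ := exists_stab S hk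
  set R : Submodule ℂ X := ⨅ n : ℕ, LinearMap.range ((S ^ n : X →L[ℂ] X) : X →ₗ[ℂ] X) with hR
  have hRcl : IsClosed (R : Set X) := by
    rw [hR, Submodule.coe_iInf]
    exact isClosed_iInter (fun n => isClosed_range_pow S hk hr n)
  have hKbot : LinearMap.ker (S : X →ₗ[ℂ] X) ⊓ LinearMap.range ((S ^ d : X →L[ℂ] X) : X →ₗ[ℂ] X) = ⊥ := by
    by_contra hne
    obtain ⟨x0, hx0mem, hx0ne⟩ := Submodule.exists_mem_ne_zero_of_ne_bot hne
    have hx0ker : S x0 = 0 := (Submodule.mem_inf.1 hx0mem).1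
    have hx0R : x0 ∈ R := by
      rw [hR, Submodule.mem_iInf]
      intro n
      rcases le_or_gt n d with hnd | hdn
      · exact range_pow_antitone S hnd (Submodule.mem_inf.1 hx0mem).2
      · have h' := hd n hdn.le
        have hx0n : x0 ∈ LinearMap.ker (S : X →ₗ[ℂ] X) ⊓ LinearMap.range ((S ^ n : X →L[ℂ] X) : X →ₗ[ℂ] X) := h' ▸ hx0mem
        exact (Submodule.mem_inf.1 hx0n).2
    have hmaps : ∀ x : X, x ∈ R → S x ∈ R := by
      intro x hx
      rw [hR, Submodule.mem_iInf] at *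
      intro n
      obtain ⟨w, rfl⟩ := hx n
      exact ⟨S w, by show (S ^ n) (S w) = S ((S ^ n) w); rw [← ContinuousLinearMap.mul_apply, ← ContinuousLinearMap.mul_apply,
        Commute.eq ((Commute.refl S).pow_right n)]⟩
    haveI : CompleteSpace R := hRcl.completeSpace_coe
    set S' : R →L[ℂ] R := (S.comp R.subtypeL).codRestrict R (fun v => hmaps v v.2) with hS'
    have hS'app : ∀ v : R, (S' v : X) = S (v : X) := fun v => rfl
    have hsurj : Function.Surjective S' := by
      rintro ⟨y, hy⟩
      have hy' : ∀ n, y ∈ LinearMap.range ((S ^ n : X →L[ℂ] X) : X →ₗ[ℂ] X) := Submodule.mem_iInf _ |>.1 hy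
      obtain ⟨w, hw⟩ := hy' (d+1)
      have hwR : (S ^ d) w ∈ R := by
        rw [hR, Submodule.mem_iInf]
        intro n
        rcases le_or_gt n d with hnd | hdn
        · exact range_pow_antitone S hnd ⟨w, rfl⟩
        · obtain ⟨u, hu⟩ := hy' (n+1)
          have h1 : S ((S ^ n) u) = y := by rw [← pow_succ_apply]; exact hu
          have h2 : S ((S ^ d) w) = y := by rw [← pow_succ_apply]; exact hw
          have hdiff : (S ^ d) w - (S ^ n) u ∈ LinearMap.ker (S : X →ₗ[ℂ] X) ⊓ LinearMap.range ((S ^ d : X →L[ℂ] X) : X →ₗ[ℂ] X) := by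
            refine Submodule.mem_inf.2 ⟨LinearMap.mem_ker.2 ?_, ?_⟩
            · rw [map_sub]; show S ((S ^ d) w) - S ((S ^ n) u) = 0; rw [h1, h2, sub_self]
            · exact Submodule.sub_mem _ ⟨w, rfl⟩ (range_pow_antitone S hdn.le ⟨u, rfl⟩)
          have hdiff' : (S ^ d) w - (S ^ n) u ∈ LinearMap.ker (S : X →ₗ[ℂ] X) ⊓ LinearMap.range ((S ^ n : X →L[ℂ] X) : X →ₗ[ℂ] X) :=
            (hd n hdn.le).symm ▸ hdiff
          have : (S ^ d) w = (S ^ n) u + ((S ^ d) w - (S ^ n) u) := by abel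
          rw [this]
          exact Submodule.add_mem _ ⟨u, rfl⟩ (Submodule.mem_inf.1 hdiff').2
      refine ⟨⟨(S ^ d) w, hwR⟩, Subtype.ext ?_⟩
      rw [hS'app]
      show S ((S ^ d) w) = y
      rw [← pow_succ_apply]; exact hw
    -- open mapping on R, build chain
    obtain ⟨C, hC, hCy⟩ := S'.exists_preimage_norm_le hsurj
    choose gp hg hgn using hCy
    set u : ℕ → R := fun n => Nat.rec (⟨x0, hx0R⟩ : R) (fun _ xn => gp xn) n with hu
    have hu0 : u 0 = ⟨x0, hx0R⟩ := rfl
    have huS : ∀ n, S' (u (n+1)) = u n := fun n => hg (u n)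
    set v : ℕ → X := fun n => ((u n : X)) with hv
    have hv0 : v 0 = x0 := rfl
    have hnorm : ∀ n, ‖v n‖ = ‖u n‖ := fun n => rfl
    have hvn : ∀ n, ‖v n‖ ≤ C ^ n * ‖v 0‖ := by
      intro n
      induction n with
      | zero => simp
      | succ k ih =>
        have h1 : ‖u (k+1)‖ ≤ C * ‖u k‖ := hgn (u k)
        have h2 : (0:ℝ) ≤ C := hC.le
        calc ‖v (k+1)‖ = ‖u (k+1)‖ := hnorm (k+1)
        _ ≤ C * ‖u k‖ := h1
        _ = C * ‖v k‖ := by rw [hnorm]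
        _ ≤ C * (C ^ k * ‖v 0‖) := by nlinarith
        _ = C ^ (k+1) * ‖v 0‖ := by ring
    have hSvs : ∀ n, S (v (n+1)) = v n := by
      intro n
      have := congrArg (Subtype.val) (huS n)
      rw [← hS'app (u (n+1))] at *
      exact this
    have hSv0 : S (v 0) = 0 := by rw [hv0]; exact hx0ker
    have := chain_contradiction S hε hC hinj v hSv0 hSvs hvn
    rw [hv0] at this
    exact hx0ne this
  refine ⟨d, le_antisymm ?_ ?_⟩
  · intro x hx
    rw [LinearMap.mem_ker] at *
    show (S ^ (d+1)) x = 0; change (S ^ d) x = 0 at hx; rw [pow_succ_apply, hx, map_zero]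
  · intro x hx
    rw [LinearMap.mem_ker] at *
    have h1 : (S ^ d) x ∈ LinearMap.ker (S : X →ₗ[ℂ] X) ⊓ LinearMap.range ((S ^ d : X →L[ℂ] X) : X →ₗ[ℂ] X) :=
      Submodule.mem_inf.2 ⟨LinearMap.mem_ker.2 (by show S ((S ^ d) x) = 0; rw [← pow_succ_apply]; exact hx), ⟨x, rfl⟩⟩
    rw [hKbot, Submodule.mem_bot] at h1
    exact h1

lemma pow_apply_le (S : X →L[ℂ] X) (k : ℕ) (y : X) :
    ‖(S ^ k) y‖ ≤ (max ‖S‖ 1) ^ k * ‖y‖ := by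
  induction k generalizing y with
  | zero => simp
  | succ m ih =>
    have h1 : (S ^ (m+1)) y = (S ^ m) (S y) := by rw [pow_succ]; rfl
    have h2 : ‖S y‖ ≤ max ‖S‖ 1 * ‖y‖ := by
      calc ‖S y‖ ≤ ‖S‖ * ‖y‖ := S.le_opNorm y
      _ ≤ max ‖S‖ 1 * ‖y‖ := by
        apply mul_le_mul_of_nonneg_right (le_max_left _ _) (norm_nonneg _)
    have ha : (0:ℝ) ≤ max ‖S‖ 1 := le_max_of_le_right zero_le_one
    have hap : (0:ℝ) ≤ (max ‖S‖ 1) ^ m := by positivity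
    calc ‖(S ^ (m+1)) y‖ = ‖(S ^ m) (S y)‖ := by rw [h1]
    _ ≤ (max ‖S‖ 1) ^ m * ‖S y‖ := ih (S y)
    _ ≤ (max ‖S‖ 1) ^ m * (max ‖S‖ 1 * ‖y‖) := by nlinarith
    _ = (max ‖S‖ 1) ^ (m+1) * ‖y‖ := by ring

lemma telescope_factor (S : X →L[ℂ] X) (p : ℕ) (z : ℂ) :
    (∑ i ∈ Finset.range (p+1), z ^ i • S ^ (p - i)) * (S - z • 1) =
      S ^ (p+1) - z ^ (p+1) • 1 := by
  have key : ∀ i ∈ Finset.range (p+1),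
      (z ^ i • S ^ (p - i)) * (S - z • 1) =
        (fun j => z ^ j • S ^ (p + 1 - j)) i - (fun j => z ^ j • S ^ (p + 1 - j)) (i+1) := by
    intro i hi
    have hip : i ≤ p := Nat.lt_succ_iff.1 (Finset.mem_range.1 hi)
    have e1 : p + 1 - i = (p - i) + 1 := by omega
    have e2 : p + 1 - (i + 1) = p - i := by omega
    simp only [e1, e2]
    rw [smul_mul_assoc, mul_sub, mul_smul_comm, mul_one, pow_succ, smul_sub, smul_smul]
    rw [pow_succ]
  rw [Finset.sum_mul, Finset.sum_congr rfl key, Finset.sum_range_sub']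
  simp

lemma telescope_nilp (S : X →L[ℂ] X) (p : ℕ) (z : ℂ) :
    (∑ j ∈ Finset.range p, z ^ (p - 1 - j) • S ^ j) * (S - z • 1) =
      S ^ p - z ^ p • 1 := by
  have key : ∀ j ∈ Finset.range p,
      (z ^ (p - 1 - j) • S ^ j) * (S - z • 1) =
        (fun i => z ^ (p - i) • S ^ i) (j+1) - (fun i => z ^ (p - i) • S ^ i) j := by
    intro j hj
    have hjp : j < p := Finset.mem_range.1 hj
    have e1 : p - (j + 1) = p - 1 - j := by omega
    have e2 : (p - 1 - j) + 1 = p - j := by omega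
    simp only [e1]
    rw [smul_mul_assoc, mul_sub, mul_smul_comm, mul_one, smul_sub, smul_smul, ← pow_succ,
      ← pow_succ, e2]
  rw [Finset.sum_mul, Finset.sum_congr rfl key]
  rw [Finset.sum_range_sub (f := fun i => z ^ (p - i) • S ^ i)]
  simp

lemma punctured_bddBelow (S : X →L[ℂ] X) {p : ℕ} (hp : 1 ≤ p)
    (hker : LinearMap.ker ((S ^ p : X →L[ℂ] X) : X →ₗ[ℂ] X) = LinearMap.ker ((S ^ (p+1) : X →L[ℂ] X) : X →ₗ[ℂ] X))
    (hcl : IsClosed ((LinearMap.range ((S ^ (p+1) : X →L[ℂ] X) : X →ₗ[ℂ] X) : Submodule ℂ X) : Set X)) :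
    ∃ ε > 0, ∀ z : ℂ, z ≠ 0 → ‖z‖ < ε →
      ∃ c > 0, ∀ x : X, c * ‖x‖ ≤ ‖(S - z • 1) x‖ := by
  set a : ℝ := max ‖S‖ 1 with ha
  have ha1 : (1:ℝ) ≤ a := le_max_right _ _
  have ha0 : (0:ℝ) < a := lt_of_lt_of_le one_pos ha1
  obtain ⟨C₂, hC₂, happrox⟩ := exists_approx_ker (S ^ (p+1)) hcl
  set C₁ : ℝ := (p+1) * a ^ p with hC₁
  have hC₁0 : 0 < C₁ := by positivity
  set B : ℝ := p * a ^ p with hB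
  have hB0 : 0 < B := by
    have : (0:ℝ) < p := by exact_mod_cast hp
    positivity
  set Ccoef : ℝ := (a+1) * C₂ * B + C₂ with hCcoef
  have hCcoef0 : 0 < Ccoef := by positivity
  refine ⟨min 1 (1/(2*Ccoef)), lt_min one_pos (by positivity), ?_⟩
  intro z hzne hzlt
  set r : ℝ := ‖z‖ with hr
  have hr0 : 0 < r := norm_pos_iff.2 hzne
  have hr1 : r < 1 := lt_of_lt_of_le hzlt (min_le_left _ _)
  have hrc : Ccoef * r < 1/2 := by
    have h1 : r < 1/(2*Ccoef) := lt_of_lt_of_le hzlt (min_le_right _ _)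
    calc Ccoef * r < Ccoef * (1/(2*Ccoef)) := by
          exact mul_lt_mul_of_pos_left h1 hCcoef0
    _ = 1/2 := by field_simp
  set Kr : ℝ := B * (1 + (a+1) * C₂ * C₁) + C₂ * C₁ with hKr
  have hKr0 : 0 < Kr := by positivity
  refine ⟨r ^ p / (2 * Kr), by positivity, ?_⟩
  intro x
  set η : ℝ := ‖(S - z • 1) x‖ with hη
  have hη0 : 0 ≤ η := norm_nonneg _
  -- bound for Q application: ‖(S^{p+1} - z^{p+1}•1) x‖ ≤ C₁ * η
  have hQ : ‖(S ^ (p+1) - z ^ (p+1) • 1) x‖ ≤ C₁ * η := by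
    rw [← telescope_factor S p z]
    rw [ContinuousLinearMap.mul_apply]
    set y : X := (S - z • 1) x with hy
    calc ‖(∑ i ∈ Finset.range (p+1), z ^ i • S ^ (p - i)) y‖
        = ‖∑ i ∈ Finset.range (p+1), (z ^ i • S ^ (p - i)) y‖ := by
          rw [ContinuousLinearMap.sum_apply]
    _ ≤ ∑ i ∈ Finset.range (p+1), ‖(z ^ i • S ^ (p - i)) y‖ := norm_sum_le _ _
    _ ≤ ∑ i ∈ Finset.range (p+1), a ^ p * ‖y‖ := by
          apply Finset.sum_le_sum
          intro i hi
          have hip : i ≤ p := Nat.lt_succ_iff.1 (Finset.mem_range.1 hi)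
          have h1 : ‖(z ^ i • S ^ (p - i)) y‖ = r ^ i * ‖(S ^ (p - i)) y‖ := by
            rw [ContinuousLinearMap.smul_apply, norm_smul, norm_pow]
          rw [h1]
          have h2 : ‖(S ^ (p - i)) y‖ ≤ a ^ (p - i) * ‖y‖ := pow_apply_le S _ y
          have h3 : a ^ (p - i) ≤ a ^ p := pow_le_pow_right₀ ha1 (by omega)
          have h4 : r ^ i ≤ 1 := pow_le_one₀ hr0.le hr1.le
          have h6 : (0:ℝ) ≤ ‖y‖ := norm_nonneg _
          calc r ^ i * ‖(S ^ (p-i)) y‖ ≤ 1 * (a ^ (p-i) * ‖y‖) :=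
                mul_le_mul h4 h2 (norm_nonneg _) zero_le_one
          _ = a ^ (p-i) * ‖y‖ := one_mul _
          _ ≤ a ^ p * ‖y‖ := mul_le_mul_of_nonneg_right h3 h6
    _ = C₁ * η := by
          rw [Finset.sum_const, Finset.card_range, hC₁, hη]
          push_cast
          ring
  -- ‖S^{p+1} x‖ ≤ C₁ η + r^{p+1} ‖x‖
  have hDx : ‖(S ^ (p+1)) x‖ ≤ C₁ * η + r ^ (p+1) * ‖x‖ := by
    have h1 : (S ^ (p+1)) x = (S ^ (p+1) - z ^ (p+1) • 1) x + z ^ (p+1) • x := by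
      simp [ContinuousLinearMap.sub_apply, ContinuousLinearMap.smul_apply,
        ContinuousLinearMap.one_apply]
    rw [h1]
    calc ‖(S ^ (p+1) - z ^ (p+1) • 1) x + z ^ (p+1) • x‖
        ≤ ‖(S ^ (p+1) - z ^ (p+1) • 1) x‖ + ‖z ^ (p+1) • x‖ := norm_add_le _ _
    _ ≤ C₁ * η + r ^ (p+1) * ‖x‖ := by
          apply add_le_add hQ
          rw [norm_smul, norm_pow]
  obtain ⟨k, hk0, hkapp⟩ := happrox x
  have hkp : (S ^ p) k = 0 := by
    have h1 : k ∈ LinearMap.ker ((S ^ (p+1) : X →L[ℂ] X) : X →ₗ[ℂ] X) := LinearMap.mem_ker.2 hk0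
    rw [← hker] at h1
    exact LinearMap.mem_ker.1 h1
  -- nilpotent bound : r^p * ‖k‖ ≤ B * ‖(S - z•1) k‖
  have hnil : r ^ p * ‖k‖ ≤ B * ‖(S - z • 1) k‖ := by
    have h1 : (S ^ p - z ^ p • 1) k = -(z ^ p • k) := by
      simp [ContinuousLinearMap.sub_apply, ContinuousLinearMap.smul_apply,
        ContinuousLinearMap.one_apply, hkp]
    have h2 : ((∑ j ∈ Finset.range p, z ^ (p - 1 - j) • S ^ j) * (S - z • 1)) k
        = -(z ^ p • k) := by rw [telescope_nilp S p z, h1]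
    have h3 : ‖z ^ p • k‖ = r ^ p * ‖k‖ := by rw [norm_smul, norm_pow]
    have h4 : ‖((∑ j ∈ Finset.range p, z ^ (p - 1 - j) • S ^ j) * (S - z • 1)) k‖
        ≤ B * ‖(S - z • 1) k‖ := by
      rw [ContinuousLinearMap.mul_apply]
      set y : X := (S - z • 1) k with hy
      calc ‖(∑ j ∈ Finset.range p, z ^ (p - 1 - j) • S ^ j) y‖
          = ‖∑ j ∈ Finset.range p, (z ^ (p - 1 - j) • S ^ j) y‖ := by
            rw [ContinuousLinearMap.sum_apply]
      _ ≤ ∑ j ∈ Finset.range p, ‖(z ^ (p - 1 - j) • S ^ j) y‖ := norm_sum_le _ _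
      _ ≤ ∑ j ∈ Finset.range p, a ^ p * ‖y‖ := by
            apply Finset.sum_le_sum
            intro j hj
            have hjp : j < p := Finset.mem_range.1 hj
            have h1' : ‖(z ^ (p-1-j) • S ^ j) y‖ = r ^ (p-1-j) * ‖(S ^ j) y‖ := by
              rw [ContinuousLinearMap.smul_apply, norm_smul, norm_pow]
            rw [h1']
            have h2' : ‖(S ^ j) y‖ ≤ a ^ j * ‖y‖ := pow_apply_le S _ y
            have h3' : a ^ j ≤ a ^ p := pow_le_pow_right₀ ha1 (by omega)
            have h4' : r ^ (p-1-j) ≤ 1 := pow_le_one₀ hr0.le hr1.le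
            have h6' : (0:ℝ) ≤ ‖y‖ := norm_nonneg _
            calc r ^ (p-1-j) * ‖(S ^ j) y‖ ≤ 1 * (a ^ j * ‖y‖) :=
                  mul_le_mul h4' h2' (norm_nonneg _) zero_le_one
            _ = a ^ j * ‖y‖ := one_mul _
            _ ≤ a ^ p * ‖y‖ := mul_le_mul_of_nonneg_right h3' h6'
      _ = B * ‖y‖ := by
            rw [Finset.sum_const, Finset.card_range, hB]
            push_cast
            ring
    calc r ^ p * ‖k‖ = ‖z ^ p • k‖ := h3.symm
    _ = ‖-(z ^ p • k)‖ := (norm_neg _).symm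
    _ = ‖((∑ j ∈ Finset.range p, z ^ (p - 1 - j) • S ^ j) * (S - z • 1)) k‖ := by rw [h2]
    _ ≤ B * ‖(S - z • 1) k‖ := h4
  -- (S - z)k bound
  have hSk : ‖(S - z • 1) k‖ ≤ η + (a + 1) * ‖x - k‖ := by
    have h1 : (S - z • 1) k = (S - z • 1) x - (S - z • 1) (x - k) := by
      rw [map_sub]; abel
    rw [h1]
    calc ‖(S - z • 1) x - (S - z • 1) (x - k)‖
        ≤ ‖(S - z • 1) x‖ + ‖(S - z • 1) (x - k)‖ := norm_sub_le _ _
    _ ≤ η + (a + 1) * ‖x - k‖ := by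
          apply add_le_add (le_of_eq rfl)
          have h2 : (S - z • 1) (x - k) = S (x - k) - z • (x - k) := by
            simp [ContinuousLinearMap.sub_apply, ContinuousLinearMap.smul_apply,
              ContinuousLinearMap.one_apply]
          rw [h2]
          calc ‖S (x - k) - z • (x - k)‖ ≤ ‖S (x-k)‖ + ‖z • (x-k)‖ := norm_sub_le _ _
          _ ≤ a * ‖x-k‖ + r * ‖x-k‖ := by
                apply add_le_add
                · calc ‖S (x-k)‖ ≤ ‖S‖ * ‖x-k‖ := S.le_opNorm _
                  _ ≤ a * ‖x-k‖ := mul_le_mul_of_nonneg_right (le_max_left _ _) (norm_nonneg _)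
                · rw [norm_smul]
          _ ≤ (a + 1) * ‖x - k‖ := by nlinarith [norm_nonneg (x - k)]
  -- e bound
  have he : ‖x - k‖ ≤ C₂ * C₁ * η + C₂ * (r ^ p * r) * ‖x‖ := by
    calc ‖x - k‖ ≤ C₂ * ‖(S ^ (p+1)) x‖ := hkapp
    _ ≤ C₂ * (C₁ * η + r ^ (p+1) * ‖x‖) := mul_le_mul_of_nonneg_left hDx hC₂.le
    _ = C₂ * C₁ * η + C₂ * (r ^ p * r) * ‖x‖ := by rw [pow_succ]; ring
  -- combine
  have htri : ‖x‖ ≤ ‖k‖ + ‖x - k‖ := by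
    calc ‖x‖ = ‖k + (x - k)‖ := by congr 1; abel
    _ ≤ ‖k‖ + ‖x - k‖ := norm_add_le _ _
  have hrp0 : (0:ℝ) < r ^ p := by positivity
  have hrpp : r ^ p ≤ 1 := pow_le_one₀ hr0.le hr1.le
  have hxk0 : (0:ℝ) ≤ ‖x - k‖ := norm_nonneg _
  have hx0 : (0:ℝ) ≤ ‖x‖ := norm_nonneg _
  have u1 : r ^ p * ‖k‖ ≤ B * η + B * (a+1) * (C₂ * C₁ * η + C₂ * (r ^ p * r) * ‖x‖) := by
    have t2 : r ^ p * ‖k‖ ≤ B * (η + (a+1) * ‖x - k‖) :=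
      hnil.trans (mul_le_mul_of_nonneg_left hSk hB0.le)
    have t3 : B * (a+1) * ‖x - k‖ ≤ B * (a+1) * (C₂ * C₁ * η + C₂ * (r ^ p * r) * ‖x‖) :=
      mul_le_mul_of_nonneg_left he (by positivity)
    nlinarith
  have u2 : r ^ p * ‖x - k‖ ≤ 1 * (C₂ * C₁ * η + C₂ * (r ^ p * r) * ‖x‖) :=
    mul_le_mul hrpp he hxk0 zero_le_one
  have t1 : r ^ p * ‖x‖ ≤ r ^ p * ‖k‖ + r ^ p * ‖x - k‖ := by nlinarith
  have hfin : r ^ p * ‖x‖ ≤ Kr * η + r ^ p * (Ccoef * r) * ‖x‖ := by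
    have expand : B * η + B * (a+1) * (C₂ * C₁ * η + C₂ * (r ^ p * r) * ‖x‖)
        + 1 * (C₂ * C₁ * η + C₂ * (r ^ p * r) * ‖x‖)
        = Kr * η + r ^ p * (Ccoef * r) * ‖x‖ := by
      rw [hKr, hCcoef]; ring
    linarith
  have hhalf : r ^ p * (Ccoef * r) * ‖x‖ ≤ (1/2) * (r ^ p * ‖x‖) := by
    have := mul_le_mul_of_nonneg_right hrc.le (mul_nonneg hrp0.le hx0)
    nlinarith
  have hfinal : r ^ p * ‖x‖ ≤ η * (2 * Kr) := by nlinarith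
  rw [div_mul_eq_mul_div, div_le_iff₀ (by positivity : (0:ℝ) < 2 * Kr)]
  exact hfinal

lemma leftPoles_subset_Ea (T : X →L[ℂ] X) : leftPoles T ⊆ Ea T := by
  rintro l ⟨hla, hasc, hcl⟩
  set S : X →L[ℂ] X := T - l • 1 with hS
  set p : ℕ := ascent S with hp
  have hmem : LinearMap.ker ((S ^ p : X →L[ℂ] X) : X →ₗ[ℂ] X) = LinearMap.ker ((S ^ (p+1) : X →L[ℂ] X) : X →ₗ[ℂ] X) := Nat.sInf_mem hasc
  have hker1id : LinearMap.ker (((1 : X →L[ℂ] X) : X →ₗ[ℂ] X)) = ⊥ := by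
    ext x
    simp [LinearMap.mem_ker]
  have hp1 : 1 ≤ p := by
    by_contra h0
    have hp0 : p = 0 := by omega
    rw [hp0, pow_zero, pow_one, hker1id] at hmem
    have hinj : ∀ x : X, S x = 0 → x = 0 := by
      intro x hx
      have : x ∈ LinearMap.ker (S : X →ₗ[ℂ] X) := LinearMap.mem_ker.2 hx
      rw [← hmem] at this
      simpa using this
    have hclr : IsClosed ((LinearMap.range (S : X →ₗ[ℂ] X) : Submodule ℂ X) : Set X) := by
      have : p + 1 = 1 := by omega
      rw [this, pow_one] at hcl
      exact hcl
    obtain ⟨c, hc, hbb⟩ := bddBelow_of_inj S hinj hclr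
    exact hla ⟨c, hc, hbb⟩
  have hkerS : LinearMap.ker (S : X →ₗ[ℂ] X) ≠ ⊥ := by
    intro hbot
    have h0 : (0 : ℕ) ∈ {n : ℕ | LinearMap.ker ((S ^ n : X →L[ℂ] X) : X →ₗ[ℂ] X) = LinearMap.ker ((S ^ (n+1) : X →L[ℂ] X) : X →ₗ[ℂ] X)} := by
      show LinearMap.ker ((S ^ 0 : X →L[ℂ] X) : X →ₗ[ℂ] X) = LinearMap.ker ((S ^ 1 : X →L[ℂ] X) : X →ₗ[ℂ] X)
      rw [pow_zero, pow_one, hker1id, hbot]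
    have : p = 0 := Nat.eq_zero_of_le_zero (Nat.sInf_le h0)
    omega
  obtain ⟨x, hxker, hxne⟩ := (Submodule.ne_bot_iff _).1 hkerS
  obtain ⟨ε, hε0, hεb⟩ := punctured_bddBelow S hp1 hmem hcl
  refine ⟨⟨hla, ε, hε0, ?_⟩, ⟨x, hxne, ?_⟩⟩
  · intro μ hμa hμne
    by_contra hlt
    push_neg at hlt
    set z : ℂ := μ - l with hz
    have hzne : z ≠ 0 := sub_ne_zero.2 hμne
    obtain ⟨c, hc, hbb⟩ := hεb z hzne hlt
    apply hμa
    refine ⟨c, hc, fun y => ?_⟩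
    have hop : T - μ • 1 = S - z • (1 : X →L[ℂ] X) := by
      rw [hS, hz, sub_smul]
      abel
    rw [hop]
    exact hbb y
  · have h1 : S x = 0 := hxker
    have h2 : T x - l • x = 0 := by
      have : S x = T x - l • x := by
        rw [hS]
        simp [ContinuousLinearMap.sub_apply, ContinuousLinearMap.smul_apply,
          ContinuousLinearMap.one_apply]
      rw [← this]
      exact h1
    have := sub_eq_zero.1 h2
    exact this

lemma Ea_subset_leftPoles (T : X →L[ℂ] X) (l : ℂ) (hEa : l ∈ Ea T)
    (hW : IsWeylOp (T - l • 1)) : l ∈ leftPoles T := by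
  obtain ⟨⟨hla, ε, hε0, hεb⟩, -⟩ := hEa
  set S : X →L[ℂ] X := T - l • 1 with hS
  have hk : FiniteDimensional ℂ (LinearMap.ker (S : X →ₗ[ℂ] X)) := hW.1.1
  have hr : IsClosed ((LinearMap.range (S : X →ₗ[ℂ] X) : Submodule ℂ X) : Set X) := hW.1.2.2
  have hinj : ∀ z : ℂ, z ≠ 0 → ‖z‖ < ε → ∀ x : X, S x = z • x → x = 0 := by
    intro z hzne hzlt x hx
    set μ : ℂ := l + z with hμ
    have hμne : μ ≠ l := by
      simp only [hμ, ne_eq, add_eq_left]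
      exact hzne
    have hμa : μ ∉ spa T := by
      intro hmem
      have := hεb μ hmem hμne
      rw [hμ] at this
      simp only [add_sub_cancel_left] at this
      linarith
    have hbb : ∃ c > 0, ∀ y : X, c * ‖y‖ ≤ ‖(T - μ • 1) y‖ := not_not.1 hμa
    obtain ⟨c, hc, hb⟩ := hbb
    have hop : T - μ • 1 = S - z • (1 : X →L[ℂ] X) := by
      rw [hS, hμ, add_smul]
      abel
    have h0 : (S - z • (1 : X →L[ℂ] X)) x = 0 := by
      simp [ContinuousLinearMap.sub_apply, ContinuousLinearMap.smul_apply,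
        ContinuousLinearMap.one_apply, hx]
    have := hb x
    rw [hop, h0] at this
    simp only [norm_zero] at this
    have hxn : ‖x‖ ≤ 0 := by nlinarith
    have := norm_nonneg x
    exact norm_eq_zero.1 (le_antisymm hxn (norm_nonneg x))
  obtain ⟨d, hd⟩ := finite_ascent_of_punctured_inj S hk hr hε0 hinj
  exact ⟨hla, ⟨d, hd⟩, isClosed_range_pow S hk hr _⟩

end ZAux
end

open ZProps in
theorem stmt3 {X : Type*} [NormedAddCommGroup X] [NormedSpace ℂ X] [CompleteSpace X]
    (hinf : ¬ FiniteDimensional ℂ X) (T : X →L[ℂ] X) :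
    PropZEa T ↔ PropZPa T ∧ Ea T = leftPoles T := by
  constructor
  · intro h
    have hEP : Ea T = leftPoles T := by
      apply Set.Subset.antisymm
      · intro l hl
        have hl' : l ∈ sp T \ spW T := by rw [h]; exact hl
        have hW : IsWeylOp (T - l • 1) := by
          have h2 := hl'.2
          simp only [spW, Set.mem_setOf_eq, not_not] at h2
          exact h2
        exact ZAux.Ea_subset_leftPoles T l hl hW
      · exact ZAux.leftPoles_subset_Ea T
    exact ⟨h.trans hEP, hEP⟩
  · rintro ⟨h1, h2⟩
    show sp T \ spW T = Ea T
    rw [h2]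
    exact h1
end
end

section
/- Let T be a bounded linear operator on an infinite-dimensional complex Banach space. T satisfies property (Z_{E_a}) if and only if T satisfies property (aw) (σ(T)\σ_W(T) = E_a^0(T)) and E_a(T) = E_a^0(T). -/
open Set

open ZProps in
theorem stmt6 {X : Type*} [NormedAddCommGroup X] [NormedSpace ℂ X] [CompleteSpace X]
    (hinf : ¬ FiniteDimensional ℂ X) (T : X →L[ℂ] X) :
    PropZEa T ↔ PropAw T ∧ Ea T = Ea0 T := by
  constructor
  · intro h
    have hEE : Ea T = Ea0 T := by
      apply Set.Subset.antisymm
      · intro l hl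
        have hlW : l ∈ sp T \ spW T := h ▸ hl
        have hW : IsWeylOp (T - l • 1) := not_not.mp hlW.2
        exact ⟨hl.1, hl.2, hW.1.1⟩
      · exact fun l hl => ⟨hl.1, hl.2.1⟩
    exact ⟨h.trans hEE, hEE⟩
  · rintro ⟨h, hEE⟩
    exact h.trans hEE.symm
end

section
/- Let T be a bounded linear operator on an infinite-dimensional complex Banach space. T satisfies property (Z_{Π_a}) if and only if T satisfies property (ab) (σ(T)\σ_W(T) = Π_a^0(T)) and Π_a(T) = Π_a^0(T). -/
open Set

open ZProps in
theorem stmt10 {X : Type*} [NormedAddCommGroup X] [NormedSpace ℂ X] [CompleteSpace X]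
    (hinf : ¬ FiniteDimensional ℂ X) (T : X →L[ℂ] X) :
    PropZPa T ↔ PropAb T ∧ leftPoles T = leftPoles0 T := by
  constructor
  · intro h
    have heq : leftPoles T = leftPoles0 T := by
      apply Set.Subset.antisymm
      · intro l hl
        refine ⟨hl, ?_⟩
        have : l ∈ sp T \ spW T := h ▸ hl
        have hw : IsWeylOp (T - l • 1) := not_not.mp this.2
        exact hw.1.1
      · exact fun l hl => hl.1
    exact ⟨by rw [PropAb, ← heq]; exact h, heq⟩
  · rintro ⟨hab, heq⟩
    rw [PropZPa, heq]; exact hab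
end
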